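/- Let A be a commutative ring in which 2 = 0 and W ∈ A. Let Q₀, Q₁ be k×k matrices over A with Q₀Q₁ = Q₁Q₀ = W·Id_k (a ℤ/2-graded matrix factorization X), and let Q' be an m×m matrix over A with Q'² = W·Id_m (an ungraded matrix factorization Y). Set Qₓ = [[0, Q₀], [Q₁, 0]] (the 2k×2k matrix of the ungraded factorization 𝔉(X)) and Q_D = [[0, Q'], [Q', 0]] (the 2m×2m matrix of the doubling 𝔇(Y)). Then the assignment sending an m×2k matrix f = (f₀ | f₁) (with m×k blocks f₀, f₁) to the block-diagonal 2m×2k matrix [[f₀, 0], [0, f₁]] induces a K-linear (A-linear) bijection between: (a) the quotient of {f ∈ M_{m×2k}(A) : Q'f = f·Qₓ} by {Q'g + g·Qₓ : g ∈ M_{m×2k}(A)}, and (b) the quotient of the set of even morphisms φ = [[a, 0],[0, d]] ∈ M_{2m×2k}(A) satisfying Q_D·φ = φ·Qₓ by the set of elements Q_D·ψ + ψ·Qₓ where ψ = [[0, b],[c, 0]] ranges over odd (anti-block-diagonal) 2m×2k matrices. (This is the adjunction isomorphism Hom_{H(MF^{un})}(𝔉(X), Y) ≅ Hom_{H⁰(MF)}(X,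 𝔇(Y)).) -/

import Mathlib

noncomputable section

variable {A : Type*} [CommRing A] {k m : ℕ}

/-- The block matrix `[[0, Q₀], [Q₁, 0]]` of a ℤ/2-graded matrix factorization
`X = (Q₀, Q₁)`, viewed (after forgetting the grading) as the ungraded factorization
`𝔉(X)`. -/
def QX (Q₀ Q₁ : Matrix (Fin k) (Fin k) A) :
    Matrix (Fin k ⊕ Fin k) (Fin k ⊕ Fin k) A :=
  Matrix.fromBlocks 0 Q₀ Q₁ 0

/-- The block matrix `[[0, Q'], [Q', 0]]` of the doubling `𝔇(Y)` of an ungraded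
factorization `Y = Q'`. -/
def QD (Q' : Matrix (Fin m) (Fin m) A) :
    Matrix (Fin m ⊕ Fin m) (Fin m ⊕ Fin m) A :=
  Matrix.fromBlocks 0 Q' Q' 0

/-- Closed morphisms `𝔉(X) → Y` between ungraded factorizations: `m×2k` matrices `f`
with `Q'·f = f·Qₓ`. -/
def closedUn (Q' : Matrix (Fin m) (Fin m) A) (Q₀ Q₁ : Matrix (Fin k) (Fin k) A) :
    Submodule A (Matrix (Fin m) (Fin k ⊕ Fin k) A) where
  carrier := {f | Q' * f = f * QX Q₀ Q₁}
  add_mem' := by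
    intro f g hf hg
    have hf' : Q' * f = f * QX Q₀ Q₁ := hf
    have hg' : Q' * g = g * QX Q₀ Q₁ := hg
    show Q' * (f + g) = (f + g) * QX Q₀ Q₁
    rw [Matrix.mul_add, Matrix.add_mul, hf', hg']
  zero_mem' := by show Q' * 0 = 0 * QX Q₀ Q₁; simp
  smul_mem' := by
    intro a f hf
    have hf' : Q' * f = f * QX Q₀ Q₁ := hf
    show Q' * (a • f) = (a • f) * QX Q₀ Q₁
    rw [Matrix.mul_smul, Matrix.smul_mul, hf']

/-- Exact morphisms `𝔉(X) → Y`: matrices of the form `Q'·g + g·Qₓ`. -/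
def exactUn (Q' : Matrix (Fin m) (Fin m) A) (Q₀ Q₁ : Matrix (Fin k) (Fin k) A) :
    Submodule A (Matrix (Fin m) (Fin k ⊕ Fin k) A) where
  carrier := {f | ∃ g : Matrix (Fin m) (Fin k ⊕ Fin k) A, f = Q' * g + g * QX Q₀ Q₁}
  add_mem' := by
    rintro f g ⟨u, hu⟩ ⟨v, hv⟩
    exact ⟨u + v, by rw [hu, hv, Matrix.mul_add, Matrix.add_mul]; abel⟩
  zero_mem' := ⟨0, by simp⟩
  smul_mem' := by
    rintro a f ⟨u, hu⟩
    exact ⟨a • u, by rw [hu]; simp [Matrix.mul_smul, Matrix.smul_mul, smul_add]⟩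

/-- Closed even morphisms `X → 𝔇(Y)` between graded factorizations: block-diagonal
`2m×2k` matrices `φ` with `Q_D·φ = φ·Qₓ`. -/
def closedEv (Q' : Matrix (Fin m) (Fin m) A) (Q₀ Q₁ : Matrix (Fin k) (Fin k) A) :
    Submodule A (Matrix (Fin m ⊕ Fin m) (Fin k ⊕ Fin k) A) where
  carrier := {φ | QD Q' * φ = φ * QX Q₀ Q₁ ∧ φ.toBlocks₁₂ = 0 ∧ φ.toBlocks₂₁ = 0}
  add_mem' := by
    rintro φ ψ ⟨hφ, hφ12, hφ21⟩ ⟨hψ, hψ12, hψ21⟩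
    refine ⟨?_, ?_, ?_⟩
    · rw [Matrix.mul_add, Matrix.add_mul, hφ, hψ]
    · refine Matrix.ext fun i j => ?_
      have h1 := congrFun (congrFun hφ12 i) j
      have h2 := congrFun (congrFun hψ12 i) j
      simp only [Matrix.toBlocks₁₂, Matrix.of_apply, Matrix.add_apply,
        Matrix.zero_apply] at h1 h2 ⊢
      rw [h1, h2, add_zero]
    · refine Matrix.ext fun i j => ?_
      have h1 := congrFun (congrFun hφ21 i) j
      have h2 := congrFun (congrFun hψ21 i) j
      simp only [Matrix.toBlocks₂₁, Matrix.of_apply, Matrix.add_apply,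
        Matrix.zero_apply] at h1 h2 ⊢
      rw [h1, h2, add_zero]
  zero_mem' := by
    refine ⟨by simp, ?_, ?_⟩ <;>
      · refine Matrix.ext fun i j => ?_
        simp [Matrix.toBlocks₁₂, Matrix.toBlocks₂₁]
  smul_mem' := by
    rintro a φ ⟨hφ, hφ12, hφ21⟩
    refine ⟨by rw [Matrix.mul_smul, Matrix.smul_mul, hφ], ?_, ?_⟩
    · refine Matrix.ext fun i j => ?_
      have h1 := congrFun (congrFun hφ12 i) j
      simp only [Matrix.toBlocks₁₂, Matrix.of_apply, Matrix.smul_apply,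
        Matrix.zero_apply] at h1 ⊢
      rw [h1, smul_zero]
    · refine Matrix.ext fun i j => ?_
      have h1 := congrFun (congrFun hφ21 i) j
      simp only [Matrix.toBlocks₂₁, Matrix.of_apply, Matrix.smul_apply,
        Matrix.zero_apply] at h1 ⊢
      rw [h1, smul_zero]

/-- Even morphisms `X → 𝔇(Y)` that are exact: of the form `Q_D·ψ + ψ·Qₓ` for an odd
(anti-block-diagonal) `ψ`. -/
def exactEv (Q' : Matrix (Fin m) (Fin m) A) (Q₀ Q₁ : Matrix (Fin k) (Fin k) A) :
    Submodule A (Matrix (Fin m ⊕ Fin m) (Fin k ⊕ Fin k) A) where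
  carrier := {φ | ∃ ψ : Matrix (Fin m ⊕ Fin m) (Fin k ⊕ Fin k) A,
    ψ.toBlocks₁₁ = 0 ∧ ψ.toBlocks₂₂ = 0 ∧ φ = QD Q' * ψ + ψ * QX Q₀ Q₁}
  add_mem' := by
    rintro φ₁ φ₂ ⟨u, hu1, hu2, hu⟩ ⟨v, hv1, hv2, hv⟩
    refine ⟨u + v, ?_, ?_, by rw [hu, hv, Matrix.mul_add, Matrix.add_mul]; abel⟩
    · refine Matrix.ext fun i j => ?_
      have h1 := congrFun (congrFun hu1 i) j
      have h2 := congrFun (congrFun hv1 i) j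
      simp only [Matrix.toBlocks₁₁, Matrix.of_apply, Matrix.add_apply,
        Matrix.zero_apply] at h1 h2 ⊢
      rw [h1, h2, add_zero]
    · refine Matrix.ext fun i j => ?_
      have h1 := congrFun (congrFun hu2 i) j
      have h2 := congrFun (congrFun hv2 i) j
      simp only [Matrix.toBlocks₂₂, Matrix.of_apply, Matrix.add_apply,
        Matrix.zero_apply] at h1 h2 ⊢
      rw [h1, h2, add_zero]
  zero_mem' := by
    refine ⟨0, ?_, ?_, by simp⟩ <;>
      · refine Matrix.ext fun i j => ?_
        simp [Matrix.toBlocks₁₁, Matrix.toBlocks₂₂]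
  smul_mem' := by
    rintro a φ ⟨u, hu1, hu2, hu⟩
    refine ⟨a • u, ?_, ?_, by rw [hu]; simp [Matrix.mul_smul, Matrix.smul_mul, smul_add]⟩
    · refine Matrix.ext fun i j => ?_
      have h1 := congrFun (congrFun hu1 i) j
      simp only [Matrix.toBlocks₁₁, Matrix.of_apply, Matrix.smul_apply,
        Matrix.zero_apply] at h1 ⊢
      rw [h1, smul_zero]
    · refine Matrix.ext fun i j => ?_
      have h1 := congrFun (congrFun hu2 i) j
      simp only [Matrix.toBlocks₂₂, Matrix.of_apply, Matrix.smul_apply,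
        Matrix.zero_apply] at h1 ⊢
      rw [h1, smul_zero]


open Matrix in
private lemma myFromColumns_add {g₁ g₂ : Matrix (Fin m) (Fin k) A} {h₁ h₂ : Matrix (Fin m) (Fin k) A} :
    fromCols g₁ h₁ + fromCols g₂ h₂ = fromCols (g₁ + g₂) (h₁ + h₂) := by
  ext i (j | j) <;> rfl

open Matrix in
private lemma mul_QX_eq (g : Matrix (Fin m) (Fin k ⊕ Fin k) A)
    (Q₀ Q₁ : Matrix (Fin k) (Fin k) A) :
    g * QX Q₀ Q₁ = fromCols (g.toCols₂ * Q₁) (g.toCols₁ * Q₀) := by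
  conv_lhs => rw [← fromCols_toCols g, QX, fromCols_mul_fromBlocks]
  simp

open Matrix in
private lemma toColumns₁_add (X Y : Matrix (Fin m) (Fin k ⊕ Fin k) A) :
    (X + Y).toCols₁ = X.toCols₁ + Y.toCols₁ := by
  ext i j; simp [toCols₁]

open Matrix in
private lemma toColumns₂_add (X Y : Matrix (Fin m) (Fin k ⊕ Fin k) A) :
    (X + Y).toCols₂ = X.toCols₂ + Y.toCols₂ := by
  ext i j; simp [toCols₂]

open Matrix in
private lemma toColumns₁_mul (P : Matrix (Fin m) (Fin m) A) (X : Matrix (Fin m) (Fin k ⊕ Fin k) A) :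
    (P * X).toCols₁ = P * X.toCols₁ := by
  ext i j; simp [toCols₁, Matrix.mul_apply]

open Matrix in
private lemma toColumns₂_mul (P : Matrix (Fin m) (Fin m) A) (X : Matrix (Fin m) (Fin k ⊕ Fin k) A) :
    (P * X).toCols₂ = P * X.toCols₂ := by
  ext i j; simp [toCols₂, Matrix.mul_apply]

open Matrix in
private lemma submatrix_inl_eq (f : Matrix (Fin m) (Fin k ⊕ Fin k) A) :
    f.submatrix id Sum.inl = f.toCols₁ := rfl

open Matrix in
private lemma submatrix_inr_eq (f : Matrix (Fin m) (Fin k ⊕ Fin k) A) :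
    f.submatrix id Sum.inr = f.toCols₂ := rfl

open Matrix in
/-- the block-diagonal extension of `f` -/
private def toEvMat (f : Matrix (Fin m) (Fin k ⊕ Fin k) A) :
    Matrix (Fin m ⊕ Fin m) (Fin k ⊕ Fin k) A :=
  fromBlocks f.toCols₁ 0 0 f.toCols₂

open Matrix in
private lemma closedUn_iff {Q' : Matrix (Fin m) (Fin m) A} {Q₀ Q₁ : Matrix (Fin k) (Fin k) A}
    {f : Matrix (Fin m) (Fin k ⊕ Fin k) A} :
    f ∈ closedUn Q' Q₀ Q₁ ↔
      Q' * f.toCols₁ = f.toCols₂ * Q₁ ∧ Q' * f.toCols₂ = f.toCols₁ * Q₀ := by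
  show Q' * f = f * QX Q₀ Q₁ ↔ _
  conv_lhs => rw [← fromCols_toCols f, mul_fromCols, fromCols_toCols,
    mul_QX_eq, fromCols_ext_iff]

open Matrix in
private lemma toEvMat_mem {Q' : Matrix (Fin m) (Fin m) A} {Q₀ Q₁ : Matrix (Fin k) (Fin k) A}
    {f : Matrix (Fin m) (Fin k ⊕ Fin k) A} (hf : f ∈ closedUn Q' Q₀ Q₁) :
    toEvMat f ∈ closedEv Q' Q₀ Q₁ := by
  obtain ⟨h1, h2⟩ := closedUn_iff.mp hf
  refine ⟨?_, by simp [toEvMat], by simp [toEvMat]⟩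
  rw [toEvMat, QD, QX, fromBlocks_multiply, fromBlocks_multiply]
  simp [h1, h2]

open Matrix in
private def toUnMat (φ : Matrix (Fin m ⊕ Fin m) (Fin k ⊕ Fin k) A) :
    Matrix (Fin m) (Fin k ⊕ Fin k) A :=
  fromCols φ.toBlocks₁₁ φ.toBlocks₂₂

open Matrix in
private lemma toUnMat_mem {Q' : Matrix (Fin m) (Fin m) A} {Q₀ Q₁ : Matrix (Fin k) (Fin k) A}
    {φ : Matrix (Fin m ⊕ Fin m) (Fin k ⊕ Fin k) A} (hφ : φ ∈ closedEv Q' Q₀ Q₁) :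
    toUnMat φ ∈ closedUn Q' Q₀ Q₁ := by
  obtain ⟨hc, h12, h21⟩ := hφ
  rw [← fromBlocks_toBlocks φ, h12, h21, QD, QX, fromBlocks_multiply, fromBlocks_multiply] at hc
  simp only [Matrix.mul_zero, Matrix.zero_mul, add_zero, zero_add] at hc
  rw [fromBlocks_inj] at hc
  rw [closedUn_iff, toUnMat, toCols₁_fromCols, toCols₂_fromCols]
  exact ⟨hc.2.2.1, hc.2.1⟩

open Matrix in
private def ΦLin (Q' : Matrix (Fin m) (Fin m) A) (Q₀ Q₁ : Matrix (Fin k) (Fin k) A) :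
    closedUn Q' Q₀ Q₁ →ₗ[A] closedEv Q' Q₀ Q₁ where
  toFun f := ⟨toEvMat f.1, toEvMat_mem f.2⟩
  map_add' f g := by
    ext (i | i) (j | j) <;>
      simp [toEvMat, toCols₁, toCols₂, fromBlocks]
  map_smul' a f := by
    ext (i | i) (j | j) <;>
      simp [toEvMat, toCols₁, toCols₂, fromBlocks]

open Matrix in
private def ΨLin (Q' : Matrix (Fin m) (Fin m) A) (Q₀ Q₁ : Matrix (Fin k) (Fin k) A) :
    closedEv Q' Q₀ Q₁ →ₗ[A] closedUn Q' Q₀ Q₁ where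
  toFun φ := ⟨toUnMat φ.1, toUnMat_mem φ.2⟩
  map_add' f g := by
    ext i (j | j) <;>
      simp [toUnMat, toBlocks₁₁, toBlocks₂₂, fromCols]
  map_smul' a f := by
    ext i (j | j) <;>
      simp [toUnMat, toBlocks₁₁, toBlocks₂₂, fromCols]

open Matrix in
private def eClosed (Q' : Matrix (Fin m) (Fin m) A) (Q₀ Q₁ : Matrix (Fin k) (Fin k) A) :
    closedUn Q' Q₀ Q₁ ≃ₗ[A] closedEv Q' Q₀ Q₁ :=
  LinearEquiv.ofLinear (ΦLin Q' Q₀ Q₁) (ΨLin Q' Q₀ Q₁)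
    (by
      ext φ : 2
      obtain ⟨hc, h12, h21⟩ := φ.2
      show toEvMat (toUnMat φ.1) = φ.1
      rw [toEvMat, toUnMat, toCols₁_fromCols, toCols₂_fromCols]
      conv_rhs => rw [← fromBlocks_toBlocks φ.1, h12, h21])
    (by
      ext f : 2
      show toUnMat (toEvMat f.1) = f.1
      rw [toEvMat, toUnMat, toBlocks_fromBlocks₁₁, toBlocks_fromBlocks₂₂,
        fromCols_toCols])

open Matrix in
private lemma map_exact (Q' : Matrix (Fin m) (Fin m) A) (Q₀ Q₁ : Matrix (Fin k) (Fin k) A) :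
    ((exactUn Q' Q₀ Q₁).comap (closedUn Q' Q₀ Q₁).subtype).map
        (eClosed Q' Q₀ Q₁ : closedUn Q' Q₀ Q₁ →ₗ[A] closedEv Q' Q₀ Q₁)
      = (exactEv Q' Q₀ Q₁).comap (closedEv Q' Q₀ Q₁).subtype := by
  ext φ
  simp only [Submodule.mem_map, Submodule.mem_comap, Submodule.subtype_apply]
  constructor
  · rintro ⟨f, ⟨g, hg⟩, rfl⟩
    refine ⟨fromBlocks 0 g.toCols₂ g.toCols₁ 0, rfl, rfl, ?_⟩
    have h1 : (f : Matrix (Fin m) (Fin k ⊕ Fin k) A).toCols₁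
        = Q' * g.toCols₁ + g.toCols₂ * Q₁ := by
      rw [hg, toColumns₁_add, toColumns₁_mul, mul_QX_eq, toCols₁_fromCols]
    have h2 : (f : Matrix (Fin m) (Fin k ⊕ Fin k) A).toCols₂
        = Q' * g.toCols₂ + g.toCols₁ * Q₀ := by
      rw [hg, toColumns₂_add, toColumns₂_mul, mul_QX_eq, toCols₂_fromCols]
    show toEvMat (f : Matrix (Fin m) (Fin k ⊕ Fin k) A) = _
    rw [toEvMat, h1, h2, QD, QX, fromBlocks_multiply, fromBlocks_multiply,
      fromBlocks_add]
    simp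
  · rintro ⟨ψ, h11, h22, hψ⟩
    have hφ := φ.2
    refine ⟨(eClosed Q' Q₀ Q₁).symm φ,
      ⟨fromCols ψ.toBlocks₂₁ ψ.toBlocks₁₂, ?_⟩, by simp⟩
    have hψ' : ψ = fromBlocks 0 ψ.toBlocks₁₂ ψ.toBlocks₂₁ 0 := by
      conv_lhs => rw [← fromBlocks_toBlocks ψ, h11, h22]
    have hφ' : (φ : Matrix (Fin m ⊕ Fin m) (Fin k ⊕ Fin k) A) =
        fromBlocks (Q' * ψ.toBlocks₂₁ + ψ.toBlocks₁₂ * Q₁) 0 0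
          (Q' * ψ.toBlocks₁₂ + ψ.toBlocks₂₁ * Q₀) := by
      rw [hψ]
      conv_lhs => rw [hψ']
      rw [QD, QX, fromBlocks_multiply, fromBlocks_multiply, fromBlocks_add]
      simp
    show toUnMat (φ : Matrix (Fin m ⊕ Fin m) (Fin k ⊕ Fin k) A) = _
    rw [toUnMat, hφ', toBlocks_fromBlocks₁₁, toBlocks_fromBlocks₂₂,
      mul_QX_eq (fromCols ψ.toBlocks₂₁ ψ.toBlocks₁₂) Q₀ Q₁,
      toCols₁_fromCols ψ.toBlocks₂₁ ψ.toBlocks₁₂,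
      toCols₂_fromCols ψ.toBlocks₂₁ ψ.toBlocks₁₂,
      mul_fromCols, myFromColumns_add]

/-- (Adjunction `Hom_{H(MF^{un})}(𝔉(X), Y) ≅ Hom_{H⁰(MF)}(X, 𝔇(Y))`.)
Over a commutative ring `A` with `2 = 0`, given a ℤ/2-graded matrix factorization
`X = (Q₀, Q₁)` of `W` (size `k`) and an ungraded matrix factorization `Y = Q'` of `W`
(size `m`), the assignment `f = (f₀ | f₁) ↦ [[f₀, 0], [0, f₁]]` induces an `A`-linear
bijection between closed-mod-exact morphisms `𝔉(X) → Y` and closed-mod-exact even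
morphisms `X → 𝔇(Y)`. -/
theorem adjunction_forget_double (h2 : (2 : A) = 0) (W : A)
    (Q₀ Q₁ : Matrix (Fin k) (Fin k) A)
    (h01 : Q₀ * Q₁ = W • (1 : Matrix (Fin k) (Fin k) A))
    (h10 : Q₁ * Q₀ = W • (1 : Matrix (Fin k) (Fin k) A))
    (Q' : Matrix (Fin m) (Fin m) A)
    (hQ' : Q' * Q' = W • (1 : Matrix (Fin m) (Fin m) A)) :
    ∃ e : (closedUn Q' Q₀ Q₁ ⧸
            (exactUn Q' Q₀ Q₁).comap (closedUn Q' Q₀ Q₁).subtype) ≃ₗ[A]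
          (closedEv Q' Q₀ Q₁ ⧸
            (exactEv Q' Q₀ Q₁).comap (closedEv Q' Q₀ Q₁).subtype),
      ∀ (f : closedUn Q' Q₀ Q₁) (φ : closedEv Q' Q₀ Q₁),
        (φ : Matrix (Fin m ⊕ Fin m) (Fin k ⊕ Fin k) A).toBlocks₁₁ =
          (f : Matrix (Fin m) (Fin k ⊕ Fin k) A).submatrix id Sum.inl →
        (φ : Matrix (Fin m ⊕ Fin m) (Fin k ⊕ Fin k) A).toBlocks₂₂ =
          (f : Matrix (Fin m) (Fin k ⊕ Fin k) A).submatrix id Sum.inr →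
        e (Submodule.Quotient.mk f) = Submodule.Quotient.mk φ := by
  classical
  refine ⟨Submodule.Quotient.equiv _ _ (eClosed Q' Q₀ Q₁) (map_exact Q' Q₀ Q₁), ?_⟩
  intro f φ h11 h22
  have hval : ((eClosed Q' Q₀ Q₁) f : Matrix (Fin m ⊕ Fin m) (Fin k ⊕ Fin k) A) = φ.1 := by
    show toEvMat f.1 = φ.1
    obtain ⟨hc, h12, h21⟩ := φ.2
    rw [submatrix_inl_eq] at h11
    rw [submatrix_inr_eq] at h22
    conv_rhs => rw [← Matrix.fromBlocks_toBlocks (φ : Matrix (Fin m ⊕ Fin m) (Fin k ⊕ Fin k) A),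
      h11, h22, h12, h21]
    rfl
  have : (eClosed Q' Q₀ Q₁) f = φ := Subtype.ext hval
  rw [Submodule.Quotient.equiv_apply, Submodule.mapQ_apply, LinearEquiv.coe_coe, this]

end
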